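/- Let r₁,…,r_k ∈ ℝⁿ and z₁,…,z_m ∈ ℂⁿ with z_i ≠ conj(z_i) for each i, let λ₁,…,λ_k be nonzero reals and μ₁,…,μ_m nonzero complex numbers, and define ℓ : H(n,2d) → ℝ by ℓ(p) = Σᵢ λᵢ p(rᵢ) + Σᵢ (μᵢ p(zᵢ) + conj(μᵢ) p(conj zᵢ)). Let E_ℝ : H(n,d) → ℝ^{k+2m} be given by E_ℝ(p) = (p(r₁),…,p(r_k), Re p(z₁), Im p(z₁),…,Re p(z_m), Im p(z_m)). If the quadratic form Q_ℓ(q) = ℓ(q²) is positive semidefinite on H(n,d), then the dimension of the image of E_ℝ is at most k + m. -/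

import Mathlib

open MvPolynomial

lemma aux_sqrt (μ : ℂ) (hμ : μ ≠ 0) : ∃ ζ : ℂ, ζ ≠ 0 ∧ μ * ζ ^ 2 = -(‖μ‖ : ℂ) := by
  obtain ⟨ζ, hζ⟩ := IsAlgClosed.exists_pow_nat_eq (-(starRingEnd ℂ μ) / (‖μ‖ : ℂ)) two_pos
  have habs : (‖μ‖ : ℂ) ≠ 0 := by
    simpa using norm_ne_zero_iff.mpr hμ
  have hc : starRingEnd ℂ μ ≠ 0 := by simpa using hμ
  refine ⟨ζ, ?_, ?_⟩
  · intro h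
    rw [h] at hζ
    have : -(starRingEnd ℂ μ) / (‖μ‖ : ℂ) = 0 := by rw [← hζ]; ring
    rw [div_eq_zero_iff] at this
    rcases this with h' | h'
    · exact hc (by simpa using h')
    · exact habs h'
  · rw [hζ]
    field_simp
    rw [mul_comm, ← Complex.normSq_eq_conj_mul_self, Complex.normSq_eq_norm_sq]
    push_cast
    ring

lemma aux_aeval_real {n : ℕ} (q : MvPolynomial (Fin n) ℝ) (x : Fin n → ℝ) :
    aeval (fun j => ((x j : ℝ) : ℂ)) q = ((eval x q : ℝ) : ℂ) := by
  have h := eval₂_comp_left (Complex.ofRealHom) (RingHom.id ℝ) x q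
  rw [aeval_def]
  rw [show eval x q = eval₂ (RingHom.id ℝ) x q from rfl]
  rw [show ((eval₂ (RingHom.id ℝ) x q : ℝ) : ℂ) = Complex.ofRealHom (eval₂ (RingHom.id ℝ) x q) from rfl, h]
  congr 1

lemma aux_aeval_conj {n : ℕ} (q : MvPolynomial (Fin n) ℝ) (x : Fin n → ℂ) :
    aeval (fun j => starRingEnd ℂ (x j)) q = starRingEnd ℂ (aeval x q) := by
  have h := eval₂_comp_left (starRingEnd ℂ) (algebraMap ℝ ℂ) x q
  rw [aeval_def, aeval_def, h]
  congr 1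
  ext a
  simp

theorem stmt_16
    (n d k m : ℕ)
    (r : Fin k → Fin n → ℝ)
    (z : Fin m → Fin n → ℂ)
    (hz : ∀ i, (fun j => starRingEnd ℂ (z i j)) ≠ z i)
    (lam : Fin k → ℝ) (hlam : ∀ i, lam i ≠ 0)
    (μ : Fin m → ℂ) (hμ : ∀ i, μ i ≠ 0)
    (hpsd : ∀ q : MvPolynomial (Fin n) ℝ, q.IsHomogeneous d →
      0 ≤ ((∑ i, (lam i : ℂ) * aeval (fun j => ((r i j : ℝ) : ℂ)) q ^ 2) +
        ∑ i, (μ i * aeval (z i) q ^ 2 +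
          starRingEnd ℂ (μ i) * aeval (fun j => starRingEnd ℂ (z i j)) q ^ 2)).re) :
    Module.finrank ℝ (Submodule.span ℝ
      {y : Fin k ⊕ (Fin m ⊕ Fin m) → ℝ | ∃ p : MvPolynomial (Fin n) ℝ,
        p.IsHomogeneous d ∧
        y = Sum.elim (fun i => eval (r i) p)
            (Sum.elim (fun i => (aeval (z i) p).re) (fun i => (aeval (z i) p).im))})
      ≤ k + m := by
  classical
  choose ζ hζ0 hζ using fun i => aux_sqrt (μ i) (hμ i)
  -- the quadratic form on the target
  set B : (Fin k ⊕ (Fin m ⊕ Fin m) → ℝ) → ℝ := fun x =>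
    (∑ i, lam i * x (Sum.inl i) ^ 2) +
    ∑ i, 2 * ((μ i).re * (x (Sum.inr (Sum.inl i)) ^ 2 - x (Sum.inr (Sum.inr i)) ^ 2)
      - (μ i).im * (2 * x (Sum.inr (Sum.inl i)) * x (Sum.inr (Sum.inr i)))) with hBdef
  -- the evaluation linear map
  let E : MvPolynomial (Fin n) ℝ →ₗ[ℝ] (Fin k ⊕ (Fin m ⊕ Fin m) → ℝ) :=
    { toFun := fun p => Sum.elim (fun i => eval (r i) p)
        (Sum.elim (fun i => (aeval (z i) p).re) (fun i => (aeval (z i) p).im)),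
      map_add' := by
        intro p q; funext s; rcases s with i | (i | i) <;> simp [map_add]
      map_smul' := by
        intro c p; funext s; rcases s with i | (i | i) <;>
          simp [smul_eval, Complex.ofReal_mul, Complex.mul_re, Complex.mul_im, mul_comm] }
  have key : ∀ p : MvPolynomial (Fin n) ℝ, p.IsHomogeneous d → 0 ≤ B (E p) := by
    intro p hp
    refine (hpsd p hp).trans_eq ?_
    rw [Complex.add_re, Complex.re_sum, Complex.re_sum, hBdef]
    congr 1
    · refine Finset.sum_congr rfl fun i _ => ?_
      rw [aux_aeval_real]
      show ((lam i : ℂ) * ((eval (r i) p : ℝ) : ℂ) ^ 2).re = lam i * (eval (r i) p) ^ 2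
      rw [← Complex.ofReal_pow, ← Complex.ofReal_mul, Complex.ofReal_re]
    · refine Finset.sum_congr rfl fun i _ => ?_
      rw [aux_aeval_conj]
      set w := aeval (z i) p with hw
      simp only [E, LinearMap.coe_mk, AddHom.coe_mk, Sum.elim_inr, Sum.elim_inl, ← hw]
      have hc : starRingEnd ℂ (μ i) * (starRingEnd ℂ w) ^ 2 = starRingEnd ℂ (μ i * w ^ 2) := by
        rw [map_mul, map_pow]
      rw [hc, Complex.add_conj, Complex.ofReal_re]
      simp only [pow_two, Complex.mul_re, Complex.mul_im]
      ring
  -- the negative directions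
  set ν : Fin m → (Fin k ⊕ (Fin m ⊕ Fin m) → ℝ) := fun i =>
    Sum.elim 0 (Sum.elim (Pi.single i (ζ i).re) (Pi.single i (ζ i).im)) with hνdef
  have hνli : LinearIndependent ℝ ν := by
    rw [linearIndependent_iff']
    intro s g hsum i hi
    have h1 := congrFun hsum (Sum.inr (Sum.inl i))
    have h2 := congrFun hsum (Sum.inr (Sum.inr i))
    simp only [hνdef, Finset.sum_apply, Pi.smul_apply, Sum.elim_inr, Sum.elim_inl, smul_eq_mul,
      Pi.single_apply, mul_ite, mul_zero, Finset.sum_ite_eq, Finset.sum_ite_eq', hi, if_true, Pi.zero_apply] at h1 h2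
    rcases mul_eq_zero.1 h1 with h | h
    · exact h
    · rcases mul_eq_zero.1 h2 with h' | h'
      · exact h'
      · exact absurd (Complex.ext h h') (hζ0 i)
  -- identify the span with the image submodule
  have hset : {y : Fin k ⊕ (Fin m ⊕ Fin m) → ℝ | ∃ p : MvPolynomial (Fin n) ℝ,
        p.IsHomogeneous d ∧
        y = Sum.elim (fun i => eval (r i) p)
            (Sum.elim (fun i => (aeval (z i) p).re) (fun i => (aeval (z i) p).im))}
      = E '' ((homogeneousSubmodule (Fin n) ℝ d : Submodule ℝ _) : Set _) := by
    ext y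
    constructor
    · rintro ⟨p, hp, rfl⟩
      exact ⟨p, (mem_homogeneousSubmodule _ _).2 hp, rfl⟩
    · rintro ⟨p, hp, rfl⟩
      exact ⟨p, (mem_homogeneousSubmodule _ _).1 hp, rfl⟩
  rw [hset, Submodule.span_image, Submodule.span_eq]
  set W := Submodule.map E (homogeneousSubmodule (Fin n) ℝ d) with hW
  set N := Submodule.span ℝ (Set.range ν) with hN
  have hdisj : Disjoint W N := by
    rw [Submodule.disjoint_def]
    intro x hxW hxN
    obtain ⟨p, hp, rfl⟩ := hxW
    obtain ⟨t, ht⟩ := (Submodule.mem_span_range_iff_exists_fun ℝ).1 hxN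
    have h0 : 0 ≤ B (E p) := key p ((mem_homogeneousSubmodule _ _).1 hp)
    have hx1 : ∀ i, E p (Sum.inl i) = 0 := by
      intro i; rw [← ht]; simp [hνdef, Finset.sum_apply]
    have hx2 : ∀ i, E p (Sum.inr (Sum.inl i)) = t i * (ζ i).re := by
      intro i; rw [← ht]
      simp [hνdef, Finset.sum_apply, Pi.single_apply, mul_ite, Finset.sum_ite_eq, Finset.sum_ite_eq']
    have hx3 : ∀ i, E p (Sum.inr (Sum.inr i)) = t i * (ζ i).im := by
      intro i; rw [← ht]
      simp [hνdef, Finset.sum_apply, Pi.single_apply, mul_ite, Finset.sum_ite_eq, Finset.sum_ite_eq']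
    have hBx : B (E p) = ∑ i, -(2 * ‖μ i‖ * t i ^ 2) := by
      rw [hBdef]
      simp only [hx1, hx2, hx3]
      rw [show (∑ i, lam i * (0:ℝ) ^ 2) = 0 by simp, zero_add]
      refine Finset.sum_congr rfl fun i _ => ?_
      have hre : (μ i).re * ((ζ i).re ^ 2 - (ζ i).im ^ 2) - (μ i).im * (2 * (ζ i).re * (ζ i).im)
          = -(‖μ i‖) := by
        have h2 := congrArg Complex.re (hζ i)
        simp only [pow_two, Complex.mul_re, Complex.mul_im, Complex.neg_re,
          Complex.ofReal_re] at h2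
        linear_combination h2
      linear_combination (2 * t i ^ 2) * hre
    have hterm : ∀ i ∈ Finset.univ, -(2 * ‖μ i‖ * t i ^ 2) ≤ (0:ℝ) := by
      intro i _
      have : (0:ℝ) ≤ 2 * ‖μ i‖ * t i ^ 2 := by positivity
      linarith
    have hzero : ∀ i, t i = 0 := by
      have hle : B (E p) ≤ 0 := hBx ▸ Finset.sum_nonpos hterm
      have hsum0 : (∑ i, -(2 * ‖μ i‖ * t i ^ 2)) = 0 := by
        rw [← hBx]; linarith
      intro i
      have h0' := (Finset.sum_eq_zero_iff_of_nonpos hterm).1 hsum0 i (Finset.mem_univ i)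
      have habs : (0:ℝ) < ‖μ i‖ := norm_pos_iff.mpr (hμ i)
      have ht2 : t i ^ 2 = 0 := by nlinarith
      exact pow_eq_zero_iff (two_ne_zero).elim |>.1 ht2
    rw [← ht]
    simp [hzero]
  haveI : FiniteDimensional ℝ W := FiniteDimensional.finiteDimensional_submodule W
  haveI : FiniteDimensional ℝ N := FiniteDimensional.finiteDimensional_submodule N
  have hNrank : Module.finrank ℝ N = m := by
    rw [hN, finrank_span_eq_card hνli, Fintype.card_fin]
  have hsum := Submodule.finrank_sup_add_finrank_inf_eq W N
  rw [disjoint_iff.1 hdisj, finrank_bot] at hsum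
  have hle : Module.finrank ℝ (W ⊔ N : Submodule ℝ _) ≤ k + (m + m) := by
    have := Submodule.finrank_le (W ⊔ N)
    simpa [Module.finrank_fintype_fun_eq_card] using this
  omega
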